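/- Let 1 ≤ s ≤ M−1 be an integer, let π₁ = (s + (1−p)/p)⁻¹, π_i = π₁ for 1 ≤ i ≤ s, π_i = π₁(1−p)^{i−s} for s < i ≤ M−1, and π_M = π₁(1−p)^{M−s}/p. Then Σ_{i=1}^{s−1} U(i)·π_i + Σ_{i=s}^{M} (U(i) − G − pP + pB)·π_i = π₁ · ( Σ_{x=1}^{s−1} U(x) + Σ_{i=0}^{M−1−s} U(s+i)(1−p)^i − G/p − P + B ). In other words, the expected average reward of the threshold-s policy equals E(s). -/

import Mathlib

open Finset

/-- Stationary distribution of the threshold-`s` aging-control chain: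
`π i = π₁` for `1 ≤ i ≤ s`, `π i = π₁ (1-p)^(i-s)` for `s < i ≤ M-1`,
and `π M = π₁ (1-p)^(M-s) / p`, where `π₁ = (s + (1-p)/p)⁻¹`. -/
noncomputable def piDist (M s : ℕ) (p : ℝ) (i : ℕ) : ℝ :=
  if i ≤ s then ((s : ℝ) + (1 - p) / p)⁻¹
  else if i ≤ M - 1 then ((s : ℝ) + (1 - p) / p)⁻¹ * (1 - p) ^ (i - s)
  else ((s : ℝ) + (1 - p) / p)⁻¹ * (1 - p) ^ (M - s) / p

/-- The expected average reward of the threshold-`s` policy, computed from the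
stationary distribution, equals the closed form
`π₁ ( Σ_{x=1}^{s-1} U x + Σ_{i=0}^{M-1-s} U(s+i)(1-p)^i − G/p − P + B )`. -/
theorem expected_average_reward (M s : ℕ) (p G P B : ℝ) (U : ℕ → ℝ)
    (hM : 2 ≤ M) (hp : 0 < p) (hp1 : p < 1)
    (hs1 : 1 ≤ s) (hsM : s ≤ M - 1)
    (hU : ∀ ⦃x y : ℕ⦄, 1 ≤ x → x ≤ y → y ≤ M → U y ≤ U x)
    (hUM : U M = 0) :
    (∑ i ∈ Finset.Icc 1 (s - 1), U i * piDist M s p i)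
      + (∑ i ∈ Finset.Icc s M, (U i - G - p * P + p * B) * piDist M s p i)
    = ((s : ℝ) + (1 - p) / p)⁻¹ *
        ((∑ x ∈ Finset.Icc 1 (s - 1), U x)
          + (∑ i ∈ Finset.range (M - s), U (s + i) * (1 - p) ^ i)
          - G / p - P + B) := by
  have hp0 : p ≠ 0 := ne_of_gt hp
  set c : ℝ := ((s : ℝ) + (1 - p) / p)⁻¹ with hc
  have hsM' : s < M := by omega
  have h1 : ∀ i ∈ Finset.Icc 1 (s - 1), U i * piDist M s p i = U i * c := by
    intro i hi
    simp only [Finset.mem_Icc] at hi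
    have his : i ≤ s := by omega
    simp [piDist, his, hc]
  rw [Finset.sum_congr rfl h1, ← Finset.sum_mul]
  have hsplit : Finset.Icc s M = insert M (Finset.Icc s (M - 1)) := by
    ext i; simp only [Finset.mem_insert, Finset.mem_Icc]; omega
  rw [hsplit, Finset.sum_insert (by simp only [Finset.mem_Icc]; omega)]
  rw [show Finset.Icc s (M - 1) = Finset.Ico s M from by
      ext i; simp only [Finset.mem_Icc, Finset.mem_Ico]; omega,
    Finset.sum_Ico_eq_sum_range]
  have hπM : piDist M s p M = c * (1 - p) ^ (M - s) / p := by
    simp [piDist, show ¬ M ≤ s from by omega, show ¬ M ≤ M - 1 from by omega, hc]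
  have h2 : ∀ j ∈ Finset.range (M - s),
      (U (s + j) - G - p * P + p * B) * piDist M s p (s + j)
      = (U (s + j) - G - p * P + p * B) * (c * (1 - p) ^ j) := by
    intro j hj
    simp only [Finset.mem_range] at hj
    by_cases h0 : j = 0
    · subst h0; simp [piDist, hc]
    · have ha : ¬ (s + j ≤ s) := by omega
      have hb : s + j ≤ M - 1 := by omega
      simp [piDist, ha, hb, Nat.add_sub_cancel_left, hc]
  rw [Finset.sum_congr rfl h2, hπM, hUM]
  have hkey : ∑ j ∈ Finset.range (M - s),
      (U (s + j) - G - p * P + p * B) * (c * (1 - p) ^ j)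
      = c * ((∑ j ∈ Finset.range (M - s), U (s + j) * (1 - p) ^ j)
          - (G + p * P - p * B) * ∑ j ∈ Finset.range (M - s), (1 - p) ^ j) := by
    rw [mul_sub, Finset.mul_sum, Finset.mul_sum, Finset.mul_sum, ← Finset.sum_sub_distrib]
    exact Finset.sum_congr rfl fun j _ => by ring
  rw [hkey]
  have hgeom : ∑ j ∈ Finset.range (M - s), (1 - p) ^ j
      = (1 - (1 - p) ^ (M - s)) / p := by
    rw [geom_sum_eq (by intro h; linarith [h] : (1 : ℝ) - p ≠ 1)]
    field_simp
    rw [show (1:ℝ) - p - 1 = -p by ring, div_eq_iff (neg_ne_zero.mpr hp0)]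
    ring
  rw [hgeom]
  field_simp
  ring
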